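/- Let x be uniformly distributed on C_R = [-R/2,R/2]^d and let f, g be bandlimited functions with ‖f‖₂ = ‖g‖₂ = 1. With Y(h) = |h(x)|² - R^{-d}∫_{C_R}|h|², one has Var(Y(f) - Y(g)) ≤ (4/R^d)·‖f-g‖²_{∞,R}, where ‖h‖_{∞,R} = sup_{t ∈ C_R}|h(t)|. -/

import Mathlib

open MeasureTheory ProbabilityTheory
open scoped ENNReal

/-- The cube `C_R = [-R/2, R/2]^d` in `ℝ^d`. -/
def cubeR (d : ℕ) (R : ℝ) : Set (EuclideanSpace ℝ (Fin d)) :=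
  {x | ∀ i, |x i| ≤ R / 2}

/-- `f` is bandlimited with spectrum in `[-1/2,1/2]^d`. -/
def IsBandlimited (d : ℕ) (f : EuclideanSpace ℝ (Fin d) → ℂ) : Prop :=
  ∃ g : EuclideanSpace ℝ (Fin d) → ℂ,
    MemLp g 2 volume ∧
    (∀ ξ : EuclideanSpace ℝ (Fin d), (∃ i, (1 : ℝ) / 2 < |ξ i|) → g ξ = 0) ∧
    ∀ x, f x = ∫ ξ, Complex.exp (2 * Real.pi * Complex.I * ((inner ℝ ξ x : ℝ) : ℂ)) * g ξ

lemma bandlimited_bound {d : ℕ} {f : EuclideanSpace ℝ (Fin d) → ℂ}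
    (hf : IsBandlimited d f) : ∃ C : ℝ, Continuous f ∧ ∀ x, ‖f x‖ ≤ C := by
  obtain ⟨g, hg2, -, hrep⟩ := hf
  have hker : ∀ (ξ x : EuclideanSpace ℝ (Fin d)),
      ‖Complex.exp (2 * Real.pi * Complex.I * ((inner ℝ ξ x : ℝ) : ℂ))‖ = 1 := by
    intro ξ x
    rw [Complex.norm_exp]
    simp
  have hnorm : ∀ (x : EuclideanSpace ℝ (Fin d)),
      (fun ξ => ‖Complex.exp (2 * Real.pi * Complex.I * ((inner ℝ ξ x : ℝ) : ℂ)) * g ξ‖)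
        = fun ξ => ‖g ξ‖ := by
    intro x
    funext ξ
    rw [norm_mul, hker, one_mul]
  refine ⟨∫ ξ, ‖g ξ‖, ?_, ?_⟩
  · by_cases hint : Integrable g volume
    · have hfeq : f = fun x => ∫ ξ,
          Complex.exp (2 * Real.pi * Complex.I * ((inner ℝ ξ x : ℝ) : ℂ)) * g ξ := funext hrep
      rw [hfeq]
      apply continuous_of_dominated (bound := fun ξ => ‖g ξ‖)
      · intro x
        exact ((Complex.continuous_exp.comp (continuous_const.mul
          (Complex.continuous_ofReal.comp
            (Continuous.inner continuous_id continuous_const)))).aestronglyMeasurable).mul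
          hg2.aestronglyMeasurable
      · intro x
        exact Filter.Eventually.of_forall fun ξ => le_of_eq (by rw [norm_mul, hker, one_mul])
      · exact hint.norm
      · exact Filter.Eventually.of_forall fun ξ =>
          (Complex.continuous_exp.comp (continuous_const.mul
            (Complex.continuous_ofReal.comp
              (Continuous.inner continuous_const continuous_id)))).mul continuous_const
    · have hno : ∀ x, ¬ Integrable (fun ξ =>
          Complex.exp (2 * Real.pi * Complex.I * ((inner ℝ ξ x : ℝ) : ℂ)) * g ξ) volume := by
        intro x hI
        apply hint
        rw [← integrable_norm_iff hg2.aestronglyMeasurable]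
        have h := hI.norm
        rwa [hnorm x] at h
      have hzero : f = fun _ => 0 := funext fun x => by rw [hrep x, integral_undef (hno x)]
      rw [hzero]; exact continuous_const
  · intro x
    rw [hrep x]
    refine (norm_integral_le_integral_norm _).trans_eq ?_
    rw [hnorm x]

set_option maxHeartbeats 2000000 in
/-- If `x` is uniformly distributed on `C_R` and `f, g` are bandlimited with
`‖f‖₂ = ‖g‖₂ = 1`, then with `Y(h) = |h(x)|² - R^{-d} ∫_{C_R} |h|²` one has
`Var(Y(f) - Y(g)) ≤ (4/R^d) ‖f - g‖²_{∞,R}`. -/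
theorem stmt_7 {Ω : Type*} [MeasureSpace Ω] [IsProbabilityMeasure (ℙ : Measure Ω)]
    (d : ℕ) (hd : 1 ≤ d) (R : ℝ) (hR : 0 < R)
    (x : Ω → EuclideanSpace ℝ (Fin d)) (hxm : Measurable x)
    (hx : Measure.map x ℙ = (ENNReal.ofReal (R ^ d))⁻¹ • volume.restrict (cubeR d R))
    (f g : EuclideanSpace ℝ (Fin d) → ℂ)
    (hf : IsBandlimited d f) (hg : IsBandlimited d g)
    (hf2 : MemLp f 2 volume) (hg2 : MemLp g 2 volume)
    (hfnorm : eLpNorm f 2 volume = 1) (hgnorm : eLpNorm g 2 volume = 1) :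
    variance (fun ω =>
        (‖f (x ω)‖ ^ 2 - (R ^ d)⁻¹ * ∫ t in cubeR d R, ‖f t‖ ^ 2) -
        (‖g (x ω)‖ ^ 2 - (R ^ d)⁻¹ * ∫ t in cubeR d R, ‖g t‖ ^ 2)) ℙ ≤
      4 / R ^ d * (⨆ t : cubeR d R, ‖f t - g t‖) ^ 2 := by
  obtain ⟨Cf, hfc, hfb⟩ := bandlimited_bound hf
  obtain ⟨Cg, hgc, hgb⟩ := bandlimited_bound hg
  set M : ℝ := ⨆ t : cubeR d R, ‖f t - g t‖ with hM
  have hMnn : 0 ≤ M := Real.iSup_nonneg fun t => norm_nonneg _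
  have hbdd : BddAbove (Set.range fun t : cubeR d R => ‖f (t : EuclideanSpace ℝ (Fin d)) - g t‖) := by
    refine ⟨Cf + Cg, ?_⟩
    rintro _ ⟨t, rfl⟩
    exact (norm_sub_le _ _).trans (add_le_add (hfb t) (hgb t))
  have hMle : ∀ t ∈ cubeR d R, ‖f t - g t‖ ≤ M := fun t ht => le_ciSup hbdd ⟨t, ht⟩
  -- measurability and finiteness of the cube
  have hcube_meas : MeasurableSet (cubeR d R) := by
    have : cubeR d R = ⋂ i, (fun y : EuclideanSpace ℝ (Fin d) => y i) ⁻¹'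
        (Set.Icc (-(R/2)) (R/2)) := by
      ext y
      simp [cubeR, Set.mem_iInter, abs_le]
    rw [this]
    exact MeasurableSet.iInter fun i => (EuclideanSpace.proj (𝕜 := ℝ) i).continuous.measurable measurableSet_Icc
  have hcube_fin : volume (cubeR d R) < ∞ := by
    refine lt_of_le_of_lt (measure_mono (?_ : cubeR d R ⊆
      Metric.closedBall 0 (Real.sqrt (d * (R/2)^2)))) measure_closedBall_lt_top
    intro t ht
    rw [Metric.mem_closedBall, dist_zero_right, EuclideanSpace.norm_eq]
    apply Real.sqrt_le_sqrt
    calc ∑ i, ‖t i‖ ^ 2 ≤ ∑ _i : Fin d, (R/2)^2 := by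
          refine Finset.sum_le_sum fun i _ => ?_
          have h1 := ht i
          have h2 : ‖t i‖ ^ 2 = |t i| ^ 2 := by rw [Real.norm_eq_abs]
          nlinarith [abs_nonneg (t i)]
      _ = d * (R/2)^2 := by simp [Finset.sum_const, Finset.card_univ]
  -- integrability of |f|^2, |g|^2 on ℝ^d and value of their integrals
  have hfint : Integrable (fun t => ‖f t‖ ^ 2) volume := by
    have h := hf2.integrable_norm_rpow two_ne_zero ENNReal.ofNat_ne_top
    have h2 : (2 : ℝ≥0∞).toReal = ((2 : ℕ) : ℝ) := by norm_num
    rw [h2] at h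
    simpa [Real.rpow_natCast] using h
  have hgint : Integrable (fun t => ‖g t‖ ^ 2) volume := by
    have h := hg2.integrable_norm_rpow two_ne_zero ENNReal.ofNat_ne_top
    have h2 : (2 : ℝ≥0∞).toReal = ((2 : ℕ) : ℝ) := by norm_num
    rw [h2] at h
    simpa [Real.rpow_natCast] using h
  have hint_one : ∀ (h : EuclideanSpace ℝ (Fin d) → ℂ), MemLp h 2 volume →
      eLpNorm h 2 volume = 1 → ∫ t, ‖h t‖ ^ 2 = 1 := by
    intro h hmem hnorm
    have he := hmem.eLpNorm_eq_integral_rpow_norm two_ne_zero ENNReal.ofNat_ne_top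
    rw [hnorm] at he
    have hu := ENNReal.ofReal_eq_one.mp he.symm
    have hp : (2 : ℝ≥0∞).toReal = (2 : ℝ) := by norm_num
    rw [hp] at hu
    have hInn : 0 ≤ ∫ a, ‖h a‖ ^ (2 : ℝ) := integral_nonneg fun a => by positivity
    have hx1 : (∫ a, ‖h a‖ ^ (2 : ℝ)) = 1 := by
      calc (∫ a, ‖h a‖ ^ (2 : ℝ))
          = ((∫ a, ‖h a‖ ^ (2 : ℝ)) ^ (2 : ℝ)⁻¹) ^ (2 : ℝ) :=
            (Real.rpow_inv_rpow hInn two_ne_zero).symm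
        _ = 1 := by rw [hu]; exact Real.one_rpow _
    simp_rw [← Real.rpow_two]
    exact hx1
  have hfI : ∫ t, ‖f t‖ ^ 2 = 1 := hint_one f hf2 hfnorm
  have hgI : ∫ t, ‖g t‖ ^ 2 = 1 := hint_one g hg2 hgnorm
  have hfcube : ∫ t in cubeR d R, ‖f t‖ ^ 2 ≤ 1 := by
    rw [← hfI]
    exact setIntegral_le_integral hfint (Filter.Eventually.of_forall fun t => by positivity)
  have hgcube : ∫ t in cubeR d R, ‖g t‖ ^ 2 ≤ 1 := by
    rw [← hgI]
    exact setIntegral_le_integral hgint (Filter.Eventually.of_forall fun t => by positivity)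
  -- the random variable
  set ψ : EuclideanSpace ℝ (Fin d) → ℝ := fun t => ‖f t‖ ^ 2 - ‖g t‖ ^ 2 with hψdef
  have hψc : Continuous ψ := ((hfc.norm.pow 2).sub (hgc.norm.pow 2))
  set φ : EuclideanSpace ℝ (Fin d) → ℝ := fun t => (‖f t‖ ^ 2 - ‖g t‖ ^ 2) ^ 2 with hφdef
  have hφc : Continuous φ := hψc.pow 2
  set W : Ω → ℝ := fun ω => ‖f (x ω)‖ ^ 2 - ‖g (x ω)‖ ^ 2 with hWdef
  have hWm : Measurable W := hψc.measurable.comp hxm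
  have hWmem : MemLp W 2 ℙ := by
    refine MemLp.of_bound hWm.aestronglyMeasurable (Cf ^ 2 + Cg ^ 2)
      (Filter.Eventually.of_forall fun ω => ?_)
    have h1 := hfb (x ω); have h2 := hgb (x ω)
    have h3 := norm_nonneg (f (x ω)); have h4 := norm_nonneg (g (x ω))
    have h5 : ‖f (x ω)‖ ^ 2 ≤ Cf ^ 2 := by nlinarith
    have h6 : ‖g (x ω)‖ ^ 2 ≤ Cg ^ 2 := by nlinarith
    simp only [hWdef]
    rw [Real.norm_eq_abs, abs_le]
    constructor <;> nlinarith [sq_nonneg (‖f (x ω)‖), sq_nonneg (‖g (x ω)‖)]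
  set c : ℝ := (R ^ d)⁻¹ * (∫ t in cubeR d R, ‖f t‖ ^ 2) -
      (R ^ d)⁻¹ * ∫ t in cubeR d R, ‖g t‖ ^ 2 with hc
  have hfun : (fun ω =>
        (‖f (x ω)‖ ^ 2 - (R ^ d)⁻¹ * ∫ t in cubeR d R, ‖f t‖ ^ 2) -
        (‖g (x ω)‖ ^ 2 - (R ^ d)⁻¹ * ∫ t in cubeR d R, ‖g t‖ ^ 2))
      = fun ω => W ω - c := by
    funext ω
    rw [hWdef, hc]
    ring
  rw [hfun]
  -- remove the constant from the variance
  have hWint : Integrable W ℙ := hWmem.integrable one_le_two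
  have hXmem : MemLp (fun ω => W ω - c) 2 ℙ := hWmem.sub (memLp_const c)
  have hEX : ℙ[fun ω => W ω - c] = ℙ[W] - c := by
    rw [integral_sub hWint (integrable_const c), integral_const]
    simp
  have hvar_eq : variance (fun ω => W ω - c) ℙ = variance W ℙ := by
    rw [variance_eq_integral hXmem.aemeasurable, variance_eq_integral hWmem.aemeasurable, hEX]
    congr 1
    funext ω
    ring
  -- change of variables
  have hmap : ∫ ω, (W ω) ^ 2 ∂ℙ = (R ^ d)⁻¹ * ∫ t in cubeR d R, φ t := by
    have h1 : ∫ ω, φ (x ω) ∂ℙ = ∫ t, φ t ∂(Measure.map x ℙ) :=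
      (integral_map hxm.aemeasurable hφc.aestronglyMeasurable).symm
    have h2 : ∀ ω, (W ω) ^ 2 = φ (x ω) := fun ω => rfl
    simp_rw [h2]
    rw [h1, hx, integral_smul_measure, smul_eq_mul]
    congr 1
    rw [ENNReal.toReal_inv, ENNReal.toReal_ofReal (by positivity)]
  -- integrability on the cube
  haveI : IsFiniteMeasure (volume.restrict (cubeR d R)) :=
    ⟨by rwa [Measure.restrict_apply_univ]⟩
  have hφ_int : IntegrableOn φ (cubeR d R) volume := by
    refine memLp_one_iff_integrable.mp (MemLp.of_bound
      hφc.aestronglyMeasurable.restrict ((Cf ^ 2 + Cg ^ 2) ^ 2)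
      (Filter.Eventually.of_forall fun t => ?_))
    have h1 := hfb t; have h2 := hgb t
    have h3 := norm_nonneg (f t); have h4 := norm_nonneg (g t)
    have h5 : ‖f t‖ ^ 2 ≤ Cf ^ 2 := by nlinarith
    have h6 : ‖g t‖ ^ 2 ≤ Cg ^ 2 := by nlinarith
    simp only [hφdef]
    rw [Real.norm_eq_abs, abs_of_nonneg (sq_nonneg _)]
    have e1 : 0 ≤ Cf ^ 2 + Cg ^ 2 - (‖f t‖ ^ 2 - ‖g t‖ ^ 2) := by nlinarith
    have e2 : 0 ≤ Cf ^ 2 + Cg ^ 2 + (‖f t‖ ^ 2 - ‖g t‖ ^ 2) := by nlinarith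
    nlinarith [mul_nonneg e1 e2]
  have hrhs_int : IntegrableOn (fun t => 2 * M ^ 2 * (‖f t‖ ^ 2 + ‖g t‖ ^ 2))
      (cubeR d R) volume := ((hfint.add hgint).const_mul _).integrableOn
  -- pointwise bound on the cube
  have hpt : ∀ t ∈ cubeR d R, φ t ≤ 2 * M ^ 2 * (‖f t‖ ^ 2 + ‖g t‖ ^ 2) := by
    intro t ht
    have h1 : |‖f t‖ - ‖g t‖| ≤ M := (abs_norm_sub_norm_le (f t) (g t)).trans (hMle t ht)
    have h2 : (‖f t‖ - ‖g t‖) ^ 2 ≤ M ^ 2 := by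
      rw [← sq_abs]
      exact pow_le_pow_left₀ (abs_nonneg _) h1 2
    have h3 := mul_le_mul_of_nonneg_right h2 (sq_nonneg (‖f t‖ + ‖g t‖))
    have h4 := mul_nonneg (sq_nonneg M) (sq_nonneg (‖f t‖ - ‖g t‖))
    simp only [hφdef]
    nlinarith [h3, h4]
  have hkey : ∫ t in cubeR d R, φ t ≤
      2 * M ^ 2 * (∫ t in cubeR d R, ‖f t‖ ^ 2) + 2 * M ^ 2 * ∫ t in cubeR d R, ‖g t‖ ^ 2 := by
    calc ∫ t in cubeR d R, φ t
        ≤ ∫ t in cubeR d R, 2 * M ^ 2 * (‖f t‖ ^ 2 + ‖g t‖ ^ 2) :=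
          setIntegral_mono_on hφ_int hrhs_int hcube_meas hpt
      _ = 2 * M ^ 2 * (∫ t in cubeR d R, ‖f t‖ ^ 2) + 2 * M ^ 2 *
          ∫ t in cubeR d R, ‖g t‖ ^ 2 := by
          rw [integral_const_mul, integral_add hfint.integrableOn hgint.integrableOn]
          ring
  -- put everything together
  calc variance (fun ω => W ω - c) ℙ = variance W ℙ := hvar_eq
    _ ≤ ℙ[W ^ 2] := variance_le_expectation_sq hWm.aestronglyMeasurable
    _ = ∫ ω, (W ω) ^ 2 ∂ℙ := rfl
    _ = (R ^ d)⁻¹ * ∫ t in cubeR d R, φ t := hmap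
    _ ≤ (R ^ d)⁻¹ * (4 * M ^ 2) := by
        have hRd : (0:ℝ) < R ^ d := by positivity
        apply mul_le_mul_of_nonneg_left _ (by positivity)
        nlinarith [sq_nonneg M]
    _ = 4 / R ^ d * M ^ 2 := by ring
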